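/- Residual error of the Shadow decoder for confined codes (Lemma 2): Let H ∈ 𝔽₂^{m×n} and A ∈ 𝔽₂^{a×n} with H·Aᵀ = 0, and assume H is (t,f)-confined relative to A with f : ℕ → ℝ monotone increasing. Let e ∈ 𝔽₂ⁿ with ‖e‖_A ≤ t/2 and let s_e ∈ 𝔽₂^m be arbitrary. Let ŝ ∈ 𝔽₂^m be any vector of minimum Hamming weight among those for which there exists e′ ∈ 𝔽₂ⁿ with ‖e′‖_A ≤ t/2 and He′ = He + s_e + ŝ, and let ê ∈ 𝔽₂ⁿ be any vector of minimum Hamming weight with Hê = He + s_e + ŝ. Then ‖e + ê‖_A ≤ f(2|s_e|). -/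

import Mathlib

open Matrix Kronecker

/-- The row space of a matrix over 𝔽₂: the span of its rows. -/
def rowSpace {m n : Type*} (A : Matrix m n (ZMod 2)) :
    Submodule (ZMod 2) (n → ZMod 2) :=
  Submodule.span (ZMod 2) (Set.range A)

/-- The reduced weight of a vector `v` relative to a matrix `A`:
`‖v‖_A = min { |v+u| : u ∈ rs(A) }`. -/
noncomputable def redW {m n : Type*} [Fintype n] (A : Matrix m n (ZMod 2))
    (v : n → ZMod 2) : ℕ :=
  sInf {k | ∃ u ∈ rowSpace A, hammingNorm (v + u) = k}

/-- `H` is `(t,f)`-sound relative to `A`. -/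
def Sound {m n a : Type*} [Fintype m] [Fintype n] (t : ℕ) (f : ℕ → ℝ)
    (H : Matrix m n (ZMod 2)) (A : Matrix a n (ZMod 2)) : Prop :=
  ∀ s : m → ZMod 2, (∃ e, H.mulVec e = s) → hammingNorm s ≤ t →
    ∃ e, H.mulVec e = s ∧ (redW A e : ℝ) ≤ f (hammingNorm s)

/-- `H` is `(t,f)`-confined relative to `A`. -/
def Confined {m n a : Type*} [Fintype m] [Fintype n] (t : ℕ) (f : ℕ → ℝ)
    (H : Matrix m n (ZMod 2)) (A : Matrix a n (ZMod 2)) : Prop :=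
  ∀ e : n → ZMod 2, redW A e ≤ t → (redW A e : ℝ) ≤ f (hammingNorm (H.mulVec e))

/-- Parity-check matrix of the length-`ℓ` repetition code. -/
def repH (ℓ : ℕ) : Matrix (Fin (ℓ - 1)) (Fin ℓ) (ZMod 2) :=
  Matrix.of fun j i => if i.val = j.val ∨ i.val = j.val + 1 then 1 else 0

/-- Thickened X-check matrix `H̃_X = ( H_X⊗I_ℓ | I_{m_X}⊗hᵀ )`. -/
def thickHX {mX n : ℕ} (HX : Matrix (Fin mX) (Fin n) (ZMod 2)) (ℓ : ℕ) :
    Matrix (Fin mX × Fin ℓ) ((Fin n × Fin ℓ) ⊕ (Fin mX × Fin (ℓ - 1))) (ZMod 2) :=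
  Matrix.fromCols (HX ⊗ₖ (1 : Matrix (Fin ℓ) (Fin ℓ) (ZMod 2)))
    ((1 : Matrix (Fin mX) (Fin mX) (ZMod 2)) ⊗ₖ (repH ℓ)ᵀ)

/-- Thickened Z-check matrix `H̃_Z = [[ H_Z⊗I_ℓ , 0 ],[ I_n⊗h , H_Xᵀ⊗I_{ℓ−1} ]]`. -/
def thickHZ {mX mZ n : ℕ} (HX : Matrix (Fin mX) (Fin n) (ZMod 2))
    (HZ : Matrix (Fin mZ) (Fin n) (ZMod 2)) (ℓ : ℕ) :
    Matrix ((Fin mZ × Fin ℓ) ⊕ (Fin n × Fin (ℓ - 1)))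
      ((Fin n × Fin ℓ) ⊕ (Fin mX × Fin (ℓ - 1))) (ZMod 2) :=
  Matrix.fromBlocks (HZ ⊗ₖ (1 : Matrix (Fin ℓ) (Fin ℓ) (ZMod 2))) 0
    ((1 : Matrix (Fin n) (Fin n) (ZMod 2)) ⊗ₖ repH ℓ)
    (HXᵀ ⊗ₖ (1 : Matrix (Fin (ℓ - 1)) (Fin (ℓ - 1)) (ZMod 2)))

/-- Metacheck matrix `M̃_Z = ( I_{m_Z}⊗h | H_Z⊗I_{ℓ−1} )`. -/
def metaMZ {mZ n : ℕ} (HZ : Matrix (Fin mZ) (Fin n) (ZMod 2)) (ℓ : ℕ) :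
    Matrix (Fin mZ × Fin (ℓ - 1))
      ((Fin mZ × Fin ℓ) ⊕ (Fin n × Fin (ℓ - 1))) (ZMod 2) :=
  Matrix.fromCols ((1 : Matrix (Fin mZ) (Fin mZ) (ZMod 2)) ⊗ₖ repH ℓ)
    (HZ ⊗ₖ (1 : Matrix (Fin (ℓ - 1)) (Fin (ℓ - 1)) (ZMod 2)))

/-- Sheet-`τ` component of a vector on the thickened qubit space. -/
def sheet {n ℓ mX : ℕ} (τ : Fin ℓ)
    (v : (Fin n × Fin ℓ) ⊕ (Fin mX × Fin (ℓ - 1)) → ZMod 2) : Fin n → ZMod 2 :=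
  fun i => v (Sum.inl (i, τ))


lemma hammingNorm_add_le' {n : Type*} [Fintype n] (x y : n → ZMod 2) :
    hammingNorm (x + y) ≤ hammingNorm x + hammingNorm y := by
  calc hammingNorm (x + y) = hammingDist (x + y) 0 := (hammingDist_zero_right _).symm
    _ ≤ hammingDist (x + y) y + hammingDist y 0 := hammingDist_triangle _ _ _
    _ = hammingNorm x + hammingNorm y := by
        rw [hammingDist_eq_hammingNorm, hammingDist_zero_right]
        have h : -(x + y) + y = x := by
          funext i
          simp only [Pi.add_apply, Pi.neg_apply]
          generalize x i = p
          generalize y i = q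
          revert p q
          decide
        rw [h]

lemma redW_set_nonempty {m n : Type*} [Fintype n] (A : Matrix m n (ZMod 2))
    (v : n → ZMod 2) :
    {k | ∃ u ∈ rowSpace A, hammingNorm (v + u) = k}.Nonempty :=
  ⟨hammingNorm v, 0, (rowSpace A).zero_mem, by rw [add_zero]⟩

lemma redW_spec {m n : Type*} [Fintype n] (A : Matrix m n (ZMod 2))
    (v : n → ZMod 2) : ∃ u ∈ rowSpace A, hammingNorm (v + u) = redW A v :=
  Nat.sInf_mem (redW_set_nonempty A v)

lemma redW_le {m n : Type*} [Fintype n] (A : Matrix m n (ZMod 2))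
    (v u : n → ZMod 2) (hu : u ∈ rowSpace A) : redW A v ≤ hammingNorm (v + u) :=
  Nat.sInf_le ⟨u, hu, rfl⟩

lemma redW_le_hammingNorm {m n : Type*} [Fintype n] (A : Matrix m n (ZMod 2))
    (v : n → ZMod 2) : redW A v ≤ hammingNorm v := by
  simpa using redW_le A v 0 (rowSpace A).zero_mem

lemma redW_add_le {m n : Type*} [Fintype n] (A : Matrix m n (ZMod 2))
    (v w : n → ZMod 2) : redW A (v + w) ≤ redW A v + redW A w := by
  obtain ⟨u, hu, hnu⟩ := redW_spec A v
  obtain ⟨u', hu', hnu'⟩ := redW_spec A w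
  calc redW A (v + w) ≤ hammingNorm (v + w + (u + u')) :=
        redW_le A _ _ ((rowSpace A).add_mem hu hu')
    _ = hammingNorm ((v + u) + (w + u')) := by ring_nf
    _ ≤ hammingNorm (v + u) + hammingNorm (w + u') := hammingNorm_add_le' _ _
    _ = redW A v + redW A w := by rw [hnu, hnu']

lemma mulVec_rowSpace_eq_zero {m n a : ℕ}
    (H : Matrix (Fin m) (Fin n) (ZMod 2)) (A : Matrix (Fin a) (Fin n) (ZMod 2))
    (hHA : H * Aᵀ = 0) {u : Fin n → ZMod 2} (hu : u ∈ rowSpace A) :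
    H.mulVec u = 0 := by
  have : u ∈ LinearMap.ker (Matrix.mulVecLin H) := by
    refine Submodule.span_le.mpr ?_ hu
    rintro _ ⟨i, rfl⟩
    simp only [SetLike.mem_coe, LinearMap.mem_ker, Matrix.mulVecLin_apply]
    funext j
    have := congrFun (congrFun hHA j) i
    simpa [Matrix.mul_apply, Matrix.mulVec, dotProduct, mul_comm] using this
  exact this

theorem shadow_decoder_residual
    {m n a : ℕ}
    (H : Matrix (Fin m) (Fin n) (ZMod 2))
    (A : Matrix (Fin a) (Fin n) (ZMod 2))
    (hHA : H * Aᵀ = 0)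
    (t : ℕ) (ht : 0 < t) (f : ℕ → ℝ) (hf : Monotone f)
    (hconf : Confined t f H A)
    (e : Fin n → ZMod 2) (he : (redW A e : ℝ) ≤ (t : ℝ) / 2)
    (se : Fin m → ZMod 2)
    (shat : Fin m → ZMod 2)
    (hshat_ex : ∃ e', (redW A e' : ℝ) ≤ (t : ℝ) / 2 ∧
      H.mulVec e' = H.mulVec e + se + shat)
    (hshat_min : ∀ s' : Fin m → ZMod 2,
      (∃ e', (redW A e' : ℝ) ≤ (t : ℝ) / 2 ∧ H.mulVec e' = H.mulVec e + se + s') →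
      hammingNorm shat ≤ hammingNorm s')
    (ehat : Fin n → ZMod 2)
    (hehat : H.mulVec ehat = H.mulVec e + se + shat)
    (hehat_min : ∀ e' : Fin n → ZMod 2,
      H.mulVec e' = H.mulVec e + se + shat → hammingNorm ehat ≤ hammingNorm e') :
    (redW A (e + ehat) : ℝ) ≤ f (2 * hammingNorm se) := by
  have hself : ∀ (k : ℕ) (x : Fin k → ZMod 2), x + x = 0 := by
    intro k x; funext i; exact CharTwo.add_self_eq_zero _
  -- |ehat| ≤ t/2 via the existence witness
  obtain ⟨e', he', hse'⟩ := hshat_ex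
  obtain ⟨u, hu, hnu⟩ := redW_spec A e'
  have hsynd : H.mulVec (e' + u) = H.mulVec e + se + shat := by
    rw [Matrix.mulVec_add, mulVec_rowSpace_eq_zero H A hHA hu, add_zero, hse']
  have hehat_le : (hammingNorm ehat : ℝ) ≤ (t : ℝ) / 2 := by
    have := hehat_min (e' + u) hsynd
    calc (hammingNorm ehat : ℝ) ≤ hammingNorm (e' + u) := by exact_mod_cast this
      _ = redW A e' := by exact_mod_cast hnu
      _ ≤ (t : ℝ) / 2 := he'
  have hredW_ehat : (redW A ehat : ℝ) ≤ (t : ℝ) / 2 :=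
    le_trans (by exact_mod_cast redW_le_hammingNorm A ehat) hehat_le
  -- redW (e + ehat) ≤ t
  have hsum : redW A (e + ehat) ≤ t := by
    have h1 : (redW A (e + ehat) : ℝ) ≤ (t : ℝ) := by
      calc (redW A (e + ehat) : ℝ) ≤ (redW A e : ℝ) + redW A ehat := by
            exact_mod_cast redW_add_le A e ehat
        _ ≤ (t : ℝ) / 2 + (t : ℝ) / 2 := add_le_add he hredW_ehat
        _ = (t : ℝ) := by ring
    exact_mod_cast h1
  -- syndrome of e + ehat
  have hsynd2 : H.mulVec (e + ehat) = se + shat := by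
    rw [Matrix.mulVec_add, hehat]
    have : H.mulVec e + (H.mulVec e + se + shat)
        = (H.mulVec e + H.mulVec e) + (se + shat) := by ring
    rw [this, hself _ (H.mulVec e), zero_add]
  -- |shat| ≤ |se|
  have hshat_le : hammingNorm shat ≤ hammingNorm se := by
    refine hshat_min se ⟨e, he, ?_⟩
    have : H.mulVec e + se + se = H.mulVec e + (se + se) := by ring
    rw [this, hself _ se, add_zero]
  -- conclude
  have hconf' := hconf (e + ehat) hsum
  rw [hsynd2] at hconf'
  refine hconf'.trans (hf ?_)
  calc hammingNorm (se + shat) ≤ hammingNorm se + hammingNorm shat :=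
        hammingNorm_add_le' _ _
    _ ≤ 2 * hammingNorm se := by omega
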